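/- Let d ≥ 1, let P be a finite set of points in ℝ^d, and let k be an integer with 2 ≤ k ≤ |P|. For v ∈ ℝ^d and S ⊆ P define σ(v,S) = Σ_{s∈S} ‖s−v‖_∞ (the sum of shell numbers of the points of S around center v). Suppose v* ∈ P and S* ⊆ P with |S*| = k together minimize σ(v,S) over all choices of v ∈ P and S ⊆ P with |S| = k. Then w(S*) ≤ (2 − 2/k)·d·OPT, where OPT = min{ w(T) : T ⊆ P, |T| = k }. (This is the approximation guarantee of algorithm MC1x1 on d-dimensional meshes.) -/

import Mathlib

open Finset

/-- The L1 (Manhattan) distance between two points of `ℝ^d`. -/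
noncomputable def dist1 {d : ℕ} (p q : Fin d → ℝ) : ℝ := ∑ i, |p i - q i|

/-- The sum of L1 distances over all unordered pairs of distinct points of `S`. -/
noncomputable def w {d : ℕ} (S : Finset (Fin d → ℝ)) : ℝ :=
  (∑ p ∈ S, ∑ q ∈ S, dist1 p q) / 2

/-- The sum of shell numbers of the points of `S` around center `v`: the shell number of
`s` is its L∞ distance `‖s − v‖` to `v` (the Pi norm on `Fin d → ℝ` is the sup norm). -/
noncomputable def shellSum {d : ℕ} (v : Fin d → ℝ) (S : Finset (Fin d → ℝ)) : ℝ :=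
  ∑ s ∈ S, ‖s - v‖

lemma dist1_nonneg {d : ℕ} (p q : Fin d → ℝ) : 0 ≤ dist1 p q :=
  Finset.sum_nonneg fun _ _ => abs_nonneg _

lemma dist1_self {d : ℕ} (p : Fin d → ℝ) : dist1 p p = 0 := by
  simp [dist1]

lemma norm_le_dist1 {d : ℕ} (p q : Fin d → ℝ) : ‖p - q‖ ≤ dist1 p q := by
  rw [pi_norm_le_iff_of_nonneg (dist1_nonneg p q)]
  intro i
  rw [Pi.sub_apply, Real.norm_eq_abs]
  exact Finset.single_le_sum (f := fun j => |p j - q j|)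
    (fun j _ => abs_nonneg _) (Finset.mem_univ i)

lemma coord_le_norm {d : ℕ} (p v : Fin d → ℝ) (i : Fin d) :
    |p i - v i| ≤ ‖p - v‖ := by
  have := norm_le_pi_norm (p - v) i
  simpa [Real.norm_eq_abs] using this

lemma dist1_le_add {d : ℕ} (p q v : Fin d → ℝ) :
    dist1 p q ≤ d * ‖p - v‖ + d * ‖q - v‖ := by
  have h : dist1 p q ≤ ∑ _i : Fin d, (‖p - v‖ + ‖q - v‖) := by
    apply Finset.sum_le_sum
    intro i _
    have h1 := coord_le_norm p v i
    have h2 := coord_le_norm q v i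
    have h3 : |p i - q i| ≤ |p i - v i| + |v i - q i| := abs_sub_le _ _ _
    rw [abs_sub_comm (v i) (q i)] at h3
    linarith
  simpa [Finset.sum_const, Finset.card_univ, nsmul_eq_mul, mul_add] using h

lemma w_nonneg {d : ℕ} (S : Finset (Fin d → ℝ)) : 0 ≤ w S := by
  unfold w
  apply div_nonneg _ (by norm_num)
  exact Finset.sum_nonneg fun p _ => Finset.sum_nonneg fun q _ => dist1_nonneg p q

/-- MC1x1 is a `(2 − 2/k)·d`-approximation on `d`-dimensional meshes: if `v* ∈ P` and a
`k`-subset `S* ⊆ P` together minimize the sum of shell numbers over all centers in `P`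
and all `k`-subsets of `P`, then `w(S*) ≤ (2 − 2/k)·d·OPT`. -/
theorem mc1x1_approximation
    (d : ℕ) (hd : 1 ≤ d)
    (P : Finset (Fin d → ℝ)) (k : ℕ) (hk2 : 2 ≤ k) (hkP : k ≤ P.card)
    (OPT : ℝ)
    (hOPT : IsLeast {x : ℝ | ∃ T ⊆ P, T.card = k ∧ w T = x} OPT)
    (vstar : Fin d → ℝ) (hv : vstar ∈ P)
    (Sstar : Finset (Fin d → ℝ)) (hS : Sstar ⊆ P) (hScard : Sstar.card = k)
    (hmin : ∀ v ∈ P, ∀ S ⊆ P, S.card = k → shellSum vstar Sstar ≤ shellSum v S) :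
    w Sstar ≤ (2 - 2 / (k : ℝ)) * d * OPT := by
  obtain ⟨⟨T, hT, hTcard, hTw⟩, _⟩ := hOPT
  have hk0 : 0 < k := lt_of_lt_of_le (by norm_num) hk2
  have hK0 : (0:ℝ) < (k:ℝ) := by exact_mod_cast hk0
  have hOPT0 : 0 ≤ OPT := hTw ▸ w_nonneg T
  set σ := shellSum vstar Sstar with hσ
  have hσ0 : 0 ≤ σ := Finset.sum_nonneg fun s _ => norm_nonneg _
  -- Step A: the average of shellSum v T over v ∈ T is ≤ (2/k) OPT
  have hTne : T.Nonempty := Finset.card_pos.mp (by omega)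
  have hsumT : ∑ v ∈ T, shellSum v T ≤ 2 * OPT := by
    have h1 : ∑ v ∈ T, shellSum v T ≤ ∑ v ∈ T, ∑ s ∈ T, dist1 s v :=
      Finset.sum_le_sum fun v _ => Finset.sum_le_sum fun s _ => norm_le_dist1 s v
    have h2 : ∑ v ∈ T, ∑ s ∈ T, dist1 s v = 2 * OPT := by
      rw [Finset.sum_comm, ← hTw]
      unfold w
      ring
    linarith
  have hexv : ∃ v ∈ T, shellSum v T ≤ 2 / (k:ℝ) * OPT := by
    by_contra hcon
    push_neg at hcon
    have hlt : ∑ v ∈ T, (2 / (k:ℝ) * OPT) < ∑ v ∈ T, shellSum v T :=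
      Finset.sum_lt_sum_of_nonempty hTne fun v hvT => hcon v hvT
    rw [Finset.sum_const, hTcard, nsmul_eq_mul] at hlt
    have : (k:ℝ) * (2 / (k:ℝ) * OPT) = 2 * OPT := by field_simp
    linarith
  obtain ⟨v0, hv0T, hv0⟩ := hexv
  -- Step A': σ ≤ (2/k) OPT
  have hσle : σ ≤ 2 / (k:ℝ) * OPT :=
    le_trans (hmin v0 (hT hv0T) T hT hTcard) hv0
  -- Step B: 2 * w Sstar ≤ (2k - 2) * d * σ
  have hrow : ∀ p ∈ Sstar, ∑ q ∈ Sstar, dist1 p q ≤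
      ((k:ℝ) - 1) * d * ‖p - vstar‖ + (d:ℝ) * (σ - ‖p - vstar‖) := by
    intro p hp
    have herase : ∑ q ∈ Sstar.erase p, dist1 p q = ∑ q ∈ Sstar, dist1 p q :=
      Finset.sum_erase _ (dist1_self p)
    rw [← herase]
    have hbound : ∑ q ∈ Sstar.erase p, dist1 p q ≤
        ∑ q ∈ Sstar.erase p, ((d:ℝ) * ‖p - vstar‖ + (d:ℝ) * ‖q - vstar‖) :=
      Finset.sum_le_sum fun q _ => dist1_le_add p q vstar
    have hsplit : ∑ q ∈ Sstar.erase p, ((d:ℝ) * ‖p - vstar‖ + (d:ℝ) * ‖q - vstar‖)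
        = ((k:ℝ) - 1) * d * ‖p - vstar‖ + (d:ℝ) * (σ - ‖p - vstar‖) := by
      rw [Finset.sum_add_distrib, Finset.sum_const, Finset.card_erase_of_mem hp,
        hScard, ← Finset.mul_sum, Finset.sum_erase_eq_sub hp, nsmul_eq_mul, hσ, shellSum]
      have hc : ((k - 1 : ℕ) : ℝ) = (k:ℝ) - 1 := by
        have : 1 ≤ k := by omega
        push_cast [this]
        ring
      rw [hc]
      ring
    linarith
  have hB : 2 * w Sstar ≤ (2 * (k:ℝ) - 2) * d * σ := by
    have h1 : ∑ p ∈ Sstar, ∑ q ∈ Sstar, dist1 p q ≤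
        ∑ p ∈ Sstar, (((k:ℝ) - 1) * d * ‖p - vstar‖ + (d:ℝ) * (σ - ‖p - vstar‖)) :=
      Finset.sum_le_sum hrow
    have h2 : ∑ p ∈ Sstar, (((k:ℝ) - 1) * d * ‖p - vstar‖ + (d:ℝ) * (σ - ‖p - vstar‖))
        = (2 * (k:ℝ) - 2) * d * σ := by
      rw [Finset.sum_add_distrib, ← Finset.mul_sum, ← Finset.mul_sum,
        Finset.sum_sub_distrib, Finset.sum_const, hScard, nsmul_eq_mul]
      have hs : ∑ p ∈ Sstar, ‖p - vstar‖ = σ := rfl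
      rw [hs]
      ring
    have h3 : 2 * w Sstar = ∑ p ∈ Sstar, ∑ q ∈ Sstar, dist1 p q := by
      unfold w; ring
    linarith
  -- conclude
  have hfinal : (2 * (k:ℝ) - 2) * d * σ ≤ (2 * (k:ℝ) - 2) * d * (2 / (k:ℝ) * OPT) := by
    apply mul_le_mul_of_nonneg_left hσle
    have : (2:ℝ) ≤ (k:ℝ) := by exact_mod_cast hk2
    have hd1 : (1:ℝ) ≤ (d:ℝ) := by exact_mod_cast hd
    nlinarith
  have heq : (2 * (k:ℝ) - 2) * d * (2 / (k:ℝ) * OPT) = 2 * ((2 - 2 / (k:ℝ)) * d * OPT) := by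
    field_simp
  linarith
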